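/- Let P_T = {p : p(x,y) = f(y)·r(x|y) for some conditional pmf r} and let Q be a family of strictly positive joint distributions {q_θ : θ ∈ Θ}. Then a pair (p*, q*) ∈ P_T × Q minimizes D(p‖q) over P_T × Q if and only if q* maximizes the log-likelihood L(q) = Σ_y f(y) log q(y) over Q and p*(x,y) = f(y)·q*(x|y). -/

import Mathlib

open scoped BigOperators

private lemma pt_le (p s : ℝ) (hp : 0 ≤ p) (hs : 0 < s) :
    p - s ≤ p * Real.log (p / s) := by
  rcases hp.eq_or_lt with h | h
  · rw [← h]; simp; linarith
  · have h1 : Real.log (s / p) ≤ s / p - 1 := Real.log_le_sub_one_of_pos (div_pos hs h)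
    have h2 : Real.log (p / s) = - Real.log (s / p) := by
      rw [← Real.log_inv, inv_div]
    have h3 : p * (s / p) = s := by field_simp
    nlinarith

private lemma pt_lt (p s : ℝ) (hp : 0 < p) (hs : 0 < s) (hne : p ≠ s) :
    p - s < p * Real.log (p / s) := by
  have ht : 0 < s / p := div_pos hs hp
  have hne' : s / p ≠ 1 := by
    intro h; apply hne; field_simp at h; linarith
  have h1 : Real.log (s / p) < s / p - 1 := Real.log_lt_sub_one_of_pos ht hne'
  have h2 : Real.log (p / s) = - Real.log (s / p) := by
    rw [← Real.log_inv, inv_div]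
  have h3 : p * (s / p) = s := by field_simp
  nlinarith

private lemma gibbs {X : Type*} [Fintype X] (p s : X → ℝ)
    (hp : ∀ x, 0 ≤ p x) (hp1 : ∑ x, p x = 1)
    (hs : ∀ x, 0 < s x) (hs1 : ∑ x, s x = 1) :
    0 ≤ ∑ x, p x * Real.log (p x / s x) ∧
      ((∑ x, p x * Real.log (p x / s x)) = 0 → ∀ x, p x = s x) := by
  have key : ∀ x, p x - s x ≤ p x * Real.log (p x / s x) := fun x => pt_le _ _ (hp x) (hs x)
  have hsum : (∑ x, (p x - s x)) = 0 := by rw [Finset.sum_sub_distrib, hp1, hs1]; ring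
  constructor
  · calc (0:ℝ) = ∑ x, (p x - s x) := hsum.symm
      _ ≤ _ := Finset.sum_le_sum (fun x _ => key x)
  · intro h x
    by_contra hne
    have hstrict : p x - s x < p x * Real.log (p x / s x) := by
      rcases (hp x).eq_or_lt with h0 | h0
      · rw [← h0]; simp; linarith [hs x]
      · exact pt_lt _ _ h0 (hs x) hne
    have hlt : (∑ x, (p x - s x)) < ∑ x, p x * Real.log (p x / s x) :=
      Finset.sum_lt_sum (fun i _ => key i) ⟨x, Finset.mem_univ x, hstrict⟩
    rw [hsum, h] at hlt; exact lt_irrefl _ hlt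

/-- A pair `(p*, q*) ∈ P_T × Q` minimizes `D(p‖q)` if and only if `q*`
maximizes the log-likelihood `L(q) = Σ_y f(y) log q(y)` over the family and
`p*(x,y) = f(y) q*(x|y)`. -/
theorem kl_min_iff_maximum_likelihood
    {X Y Θ : Type*} [Fintype X] [Fintype Y] [Nonempty X] [Nonempty Y]
    (f : Y → ℝ) (hf1 : ∑ y, f y = 1) (hfpos : ∀ y, 0 < f y)
    (q : Θ → X → Y → ℝ)
    (hq1 : ∀ θ, ∑ x, ∑ y, q θ x y = 1) (hqpos : ∀ θ x y, 0 < q θ x y)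
    (hmax : ∃ θ0 : Θ, ∀ θ : Θ,
      (∑ y, f y * Real.log (∑ x, q θ x y)) ≤ ∑ y, f y * Real.log (∑ x, q θ0 x y))
    (rstar : Y → X → ℝ) (θstar : Θ)
    (hr1 : ∀ y, ∑ x, rstar y x = 1) (hrnn : ∀ y x, 0 ≤ rstar y x) :
    ((∀ (r : Y → X → ℝ) (θ : Θ), (∀ y, ∑ x, r y x = 1) → (∀ y x, 0 ≤ r y x) →
        (∑ x, ∑ y, f y * rstar y x * Real.log (f y * rstar y x / q θstar x y))
          ≤ ∑ x, ∑ y, f y * r y x * Real.log (f y * r y x / q θ x y))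
      ↔ ((∀ θ : Θ, (∑ y, f y * Real.log (∑ x, q θ x y))
              ≤ ∑ y, f y * Real.log (∑ x, q θstar x y))
          ∧ ∀ y x, rstar y x = q θstar x y / (∑ x', q θstar x' y))) := by
  classical
  set Qy : Θ → Y → ℝ := fun θ y => ∑ x, q θ x y with hQy
  have hQypos : ∀ θ y, 0 < Qy θ y := fun θ y =>
    Finset.sum_pos (fun x _ => hqpos θ x y) Finset.univ_nonempty
  set cond : Θ → Y → X → ℝ := fun θ y x => q θ x y / Qy θ y with hcond
  have hcondpos : ∀ θ y x, 0 < cond θ y x := fun θ y x =>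
    div_pos (hqpos θ x y) (hQypos θ y)
  have hcond1 : ∀ θ y, ∑ x, cond θ y x = 1 := by
    intro θ y
    show (∑ x, q θ x y / Qy θ y) = 1
    rw [← Finset.sum_div]
    exact div_self (hQypos θ y).ne'
  set L : Θ → ℝ := fun θ => ∑ y, f y * Real.log (Qy θ y) with hL
  set C : ℝ := ∑ y, f y * Real.log (f y) with hC
  set D : (Y → X → ℝ) → Θ → ℝ := fun r θ =>
    ∑ x, ∑ y, f y * r y x * Real.log (f y * r y x / q θ x y) with hD
  set K : (Y → X → ℝ) → Θ → Y → ℝ := fun r θ y =>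
    ∑ x, r y x * Real.log (r y x / cond θ y x) with hK'
  have decomp : ∀ (r : Y → X → ℝ) (θ : Θ), (∀ y, ∑ x, r y x = 1) → (∀ y x, 0 ≤ r y x) →
      D r θ = C - L θ + ∑ y, f y * K r θ y := by
    intro r θ hr1' hrnn'
    have hcomm : D r θ = ∑ y, ∑ x, f y * r y x * Real.log (f y * r y x / q θ x y) :=
      Finset.sum_comm
    rw [hcomm]
    have hy : ∀ y, ∑ x, f y * r y x * Real.log (f y * r y x / q θ x y)
        = f y * Real.log (f y / Qy θ y) + f y * K r θ y := by
      intro y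
      have hfy := hfpos y
      have hQ := hQypos θ y
      have hx : ∀ x, f y * r y x * Real.log (f y * r y x / q θ x y)
          = f y * Real.log (f y / Qy θ y) * r y x
            + f y * (r y x * Real.log (r y x / cond θ y x)) := by
        intro x
        rcases (hrnn' y x).eq_or_lt with h0 | h0
        · rw [← h0]; simp
        · have hq' := hqpos θ x y
          have e1 : f y * r y x / q θ x y = (f y / Qy θ y) * (r y x / cond θ y x) := by
            show f y * r y x / q θ x y = (f y / Qy θ y) * (r y x / (q θ x y / Qy θ y))
            field_simp
          rw [e1, Real.log_mul (by positivity)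
            (div_pos h0 (hcondpos θ y x)).ne']
          ring
      rw [Finset.sum_congr rfl (fun x _ => hx x), Finset.sum_add_distrib,
        ← Finset.mul_sum, ← Finset.mul_sum, hr1' y]
      ring
    rw [Finset.sum_congr rfl (fun y _ => hy y), Finset.sum_add_distrib]
    congr 1
    have hCL : C - L θ = ∑ y, (f y * Real.log (f y) - f y * Real.log (Qy θ y)) := by
      rw [Finset.sum_sub_distrib]
    rw [hCL]
    apply Finset.sum_congr rfl
    intro y _
    rw [Real.log_div (hfpos y).ne' (hQypos θ y).ne']
    ring
  have hKgibbs : ∀ (r : Y → X → ℝ) (θ : Θ) (y : Y),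
      (∀ y, ∑ x, r y x = 1) → (∀ y x, 0 ≤ r y x) →
      0 ≤ K r θ y ∧ (K r θ y = 0 → ∀ x, r y x = cond θ y x) :=
    fun r θ y h1 h2 =>
      gibbs (r y) (cond θ y) (h2 y) (h1 y) (fun x => hcondpos θ y x) (hcond1 θ y)
  have hKcond : ∀ θ y, K (cond θ) θ y = 0 := by
    intro θ y
    apply Finset.sum_eq_zero
    intro x _
    rw [div_self (hcondpos θ y x).ne', Real.log_one, mul_zero]
  have hDcond : ∀ θ, D (cond θ) θ = C - L θ := by
    intro θ
    rw [decomp _ _ (hcond1 θ) (fun y x => (hcondpos θ y x).le)]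
    simp [hKcond]
  have hKsumnn : ∀ (r : Y → X → ℝ) (θ : Θ),
      (∀ y, ∑ x, r y x = 1) → (∀ y x, 0 ≤ r y x) →
      0 ≤ ∑ y, f y * K r θ y :=
    fun r θ h1 h2 => Finset.sum_nonneg fun y _ =>
      mul_nonneg (hfpos y).le ((hKgibbs r θ y h1 h2).1)
  constructor
  · intro hmin
    have hstar_le : ∀ θ, D rstar θstar ≤ C - L θ := by
      intro θ
      have h := hmin (cond θ) θ (hcond1 θ) (fun y x => (hcondpos θ y x).le)
      calc D rstar θstar ≤ D (cond θ) θ := h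
        _ = C - L θ := hDcond θ
    have hDr : D rstar θstar = C - L θstar + ∑ y, f y * K rstar θstar y :=
      decomp rstar θstar hr1 hrnn
    have hKs := hKsumnn rstar θstar hr1 hrnn
    have hKzero : ∑ y, f y * K rstar θstar y = 0 := by
      have h1 := hstar_le θstar
      rw [hDr] at h1
      linarith
    constructor
    · intro θ
      have h1 := hstar_le θ
      have h2 : D rstar θstar = C - L θstar := by rw [hDr, hKzero]; ring
      show L θ ≤ L θstar
      rw [h2] at h1
      linarith
    · intro y x
      have heach : f y * K rstar θstar y = 0 :=
        (Finset.sum_eq_zero_iff_of_nonneg (fun y _ =>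
          mul_nonneg (hfpos y).le ((hKgibbs rstar θstar y hr1 hrnn).1))).mp
          hKzero y (Finset.mem_univ y)
      have hKy : K rstar θstar y = 0 := by
        rcases mul_eq_zero.mp heach with h | h
        · exact absurd h (hfpos y).ne'
        · exact h
      exact (hKgibbs rstar θstar y hr1 hrnn).2 hKy x
  · rintro ⟨hLmax, hreq⟩ r θ h1 h2
    have hrc : rstar = cond θstar := funext fun y => funext fun x => hreq y x
    show D rstar θstar ≤ D r θ
    rw [hrc, hDcond θstar]
    have hd := decomp r θ h1 h2
    have hKs := hKsumnn r θ h1 h2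
    have hLθ : L θ ≤ L θstar := hLmax θ
    calc C - L θstar ≤ C - L θ := by linarith
      _ ≤ D r θ := by rw [hd]; linarith
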